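/- Tree Termination: the tree-recognition system (𝓛, 𝓡) with 𝓡 = {r0, r1, r2} is terminating on TLRGs, and every derivation sequence G₀ ⇒_𝓡 G₁ ⇒_𝓡 ⋯ ⇒_𝓡 G_n from a TLRG G₀ has length n at most 2·|V_{G₀}|. -/

import Mathlib

/-! # Rooted graph transformation with relabelling -/

/-- A graph over a label alphabet `(LV, LE)`: finite vertex and edge sets, total
source/target functions, a partial node-labelling function `l`, a total
edge-labelling function `m`, and a partial rootedness function `p`
(`some true` = root node, `some false` = non-root, `none` = undefined). -/
structure LGraph (LV LE : Type) : Type 1 where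
  V : Type
  E : Type
  finV : Finite V
  finE : Finite E
  s : E → V
  t : E → V
  l : V → Option LV
  m : E → LE
  p : V → Option Bool

namespace LGraph

variable {LV LE : Type}

def IsTotallyLabelled (G : LGraph LV LE) : Prop := ∀ v, (G.l v).isSome
def IsTotallyRooted (G : LGraph LV LE) : Prop := ∀ v, (G.p v).isSome
/-- totally labelled, totally rooted graph -/
def IsTLRG (G : LGraph LV LE) : Prop := G.IsTotallyLabelled ∧ G.IsTotallyRooted

/-- The number of root nodes `|p⁻¹({1})|`. -/
noncomputable def rootCount (G : LGraph LV LE) : ℕ := Nat.card {v : G.V // G.p v = some true}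

/-- The degree of a node. -/
noncomputable def degree (G : LGraph LV LE) (v : G.V) : ℕ :=
  Nat.card {e : G.E // G.s e = v} + Nat.card {e : G.E // G.t e = v}

end LGraph

/-- LGraph morphisms preserve sources, targets, edge labels, and node labels and
rootedness wherever these are defined. -/
structure Morphism {LV LE : Type} (G H : LGraph LV LE) : Type where
  fV : G.V → H.V
  fE : G.E → H.E
  src : ∀ e, fV (G.s e) = H.s (fE e)
  tgt : ∀ e, fV (G.t e) = H.t (fE e)
  edgeLabel : ∀ e, G.m e = H.m (fE e)
  nodeLabel : ∀ v x, G.l v = some x → H.l (fV v) = some x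
  rootedness : ∀ v b, G.p v = some b → H.p (fV v) = some b

namespace Morphism

variable {LV LE : Type} {G H K : LGraph LV LE}

def Injective (g : Morphism G H) : Prop := Function.Injective g.fV ∧ Function.Injective g.fE

/-- identity morphism -/
def ident (G : LGraph LV LE) : Morphism G G where
  fV := id
  fE := id
  src := fun _ => rfl
  tgt := fun _ => rfl
  edgeLabel := fun _ => rfl
  nodeLabel := fun _ _ h => h
  rootedness := fun _ _ h => h

/-- composition of morphisms -/
def comp (g : Morphism G H) (h : Morphism H K) : Morphism G K where
  fV := h.fV ∘ g.fV
  fE := h.fE ∘ g.fE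
  src := fun e => by simp [Function.comp, g.src e, h.src (g.fE e)]
  tgt := fun e => by simp [Function.comp, g.tgt e, h.tgt (g.fE e)]
  edgeLabel := fun e => by simp [Function.comp, ← h.edgeLabel (g.fE e), g.edgeLabel e]
  nodeLabel := fun v x hx => h.nodeLabel _ _ (g.nodeLabel v x hx)
  rootedness := fun v b hb => h.rootedness _ _ (g.rootedness v b hb)

end Morphism

/-- An isomorphism of graphs: a morphism with a two-sided inverse morphism. -/
structure Iso {LV LE : Type} (G H : LGraph LV LE) : Type where
  toMor : Morphism G H
  invMor : Morphism H G
  leftV : ∀ v, invMor.fV (toMor.fV v) = v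
  leftE : ∀ e, invMor.fE (toMor.fE e) = e
  rightV : ∀ v, toMor.fV (invMor.fV v) = v
  rightE : ∀ e, toMor.fE (invMor.fE e) = e

/-- A rule `⟨L ← K → R⟩`: graphs `L`, `K`, `R` together with inclusion
(injective) morphisms `K ↪ L` and `K ↪ R`.  (In the rooted relabelling setting
`L` and `R` are additionally required to be TLRGs; this requirement is stated
as a hypothesis where needed.) -/
structure Rule (LV LE : Type) : Type 1 where
  L : LGraph LV LE
  K : LGraph LV LE
  R : LGraph LV LE
  incL : Morphism K L
  incR : Morphism K R
  injL : incL.Injective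
  injR : incR.Injective

namespace Rule

variable {LV LE : Type} (r : Rule LV LE) (G : LGraph LV LE)

/-- The inverse rule `r⁻¹ = ⟨R ← K → L⟩`. -/
def inv (r : Rule LV LE) : Rule LV LE where
  L := r.R
  K := r.K
  R := r.L
  incL := r.incR
  incR := r.incL
  injL := r.injR
  injR := r.injL

/-- The dangling condition: no edge of `G ∖ g(L)` is incident to a node of `g(L ∖ K)`. -/
def Dangling (g : Morphism r.L G) : Prop :=
  ∀ e : G.E, (∀ e' : r.L.E, g.fE e' ≠ e) →
    ∀ v : r.L.V, (∀ k : r.K.V, r.incL.fV k ≠ v) →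
      G.s e ≠ g.fV v ∧ G.t e ≠ g.fV v

/-- The match `g` is applicable: it is injective and satisfies the dangling condition. -/
def Applicable (g : Morphism r.L G) : Prop := g.Injective ∧ r.Dangling G g

/-- the nodes `g(L ∖ K)` deleted by applying `r` via `g` -/
def DelV (g : Morphism r.L G) : Set G.V :=
  {x | ∃ v : r.L.V, (∀ k : r.K.V, r.incL.fV k ≠ v) ∧ g.fV v = x}

/-- the edges `g(L ∖ K)` deleted by applying `r` via `g` -/
def DelE (g : Morphism r.L G) : Set G.E :=
  {x | ∃ e : r.L.E, (∀ k : r.K.E, r.incL.fE k ≠ e) ∧ g.fE e = x}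

theorem kept_incL {g : Morphism r.L G} (hinj : g.Injective) (k : r.K.V) :
    g.fV (r.incL.fV k) ∉ r.DelV G g := by
  rintro ⟨v, hv, heq⟩
  exact hv k (hinj.1 heq).symm

theorem kept_src {g : Morphism r.L G} (h : r.Applicable G g) {e : G.E}
    (he : e ∉ r.DelE G g) : G.s e ∉ r.DelV G g := by
  rintro ⟨v, hv, heq⟩
  by_cases hc : ∃ e', g.fE e' = e
  · obtain ⟨e', rfl⟩ := hc
    by_cases hk : ∃ k, r.incL.fE k = e'
    · obtain ⟨k, rfl⟩ := hk
      have h1 : g.fV (r.L.s (r.incL.fE k)) = G.s (g.fE (r.incL.fE k)) := g.src _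
      have h2 : r.incL.fV (r.K.s k) = r.L.s (r.incL.fE k) := r.incL.src k
      have h3 : g.fV v = g.fV (r.incL.fV (r.K.s k)) := by rw [heq, h2, h1]
      exact hv _ (h.1.1 h3).symm
    · exact he ⟨e', fun k hk' => hk ⟨k, hk'⟩, rfl⟩
  · exact (h.2 e (fun e' he' => hc ⟨e', he'⟩) v hv).1 heq.symm

theorem kept_tgt {g : Morphism r.L G} (h : r.Applicable G g) {e : G.E}
    (he : e ∉ r.DelE G g) : G.t e ∉ r.DelV G g := by
  rintro ⟨v, hv, heq⟩
  by_cases hc : ∃ e', g.fE e' = e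
  · obtain ⟨e', rfl⟩ := hc
    by_cases hk : ∃ k, r.incL.fE k = e'
    · obtain ⟨k, rfl⟩ := hk
      have h1 : g.fV (r.L.t (r.incL.fE k)) = G.t (g.fE (r.incL.fE k)) := g.tgt _
      have h2 : r.incL.fV (r.K.t k) = r.L.t (r.incL.fE k) := r.incL.tgt k
      have h3 : g.fV v = g.fV (r.incL.fV (r.K.t k)) := by rw [heq, h2, h1]
      exact hv _ (h.1.1 h3).symm
    · exact he ⟨e', fun k hk' => hk ⟨k, hk'⟩, rfl⟩
  · exact (h.2 e (fun e' he' => hc ⟨e', he'⟩) v hv).2 heq.symm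

attribute [local instance] Classical.propDecidable

/-- The result graph of applying `r` to `G` via an applicable match `g`:
delete `g(L ∖ K)` (undefining labels/rootedness of images of interface nodes
where they are undefined in `K`), then add `R ∖ K` disjointly, relabelling
(and re-rooting) the images of interface nodes according to `R`. -/
noncomputable def result (g : Morphism r.L G) (h : r.Applicable G g) : LGraph LV LE where
  V := {x : G.V // x ∉ r.DelV G g} ⊕ {v : r.R.V // ∀ k, r.incR.fV k ≠ v}
  E := {x : G.E // x ∉ r.DelE G g} ⊕ {e : r.R.E // ∀ k, r.incR.fE k ≠ e}
  finV := by
    haveI := G.finV; haveI := r.R.finV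
    infer_instance
  finE := by
    haveI := G.finE; haveI := r.R.finE
    infer_instance
  s := fun e =>
    match e with
    | Sum.inl x => Sum.inl ⟨G.s x.1, r.kept_src G h x.2⟩
    | Sum.inr x =>
        if hk : ∃ k, r.incR.fV k = r.R.s x.1 then
          Sum.inl ⟨g.fV (r.incL.fV hk.choose), r.kept_incL G h.1 _⟩
        else Sum.inr ⟨r.R.s x.1, fun k hk' => hk ⟨k, hk'⟩⟩
  t := fun e =>
    match e with
    | Sum.inl x => Sum.inl ⟨G.t x.1, r.kept_tgt G h x.2⟩
    | Sum.inr x =>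
        if hk : ∃ k, r.incR.fV k = r.R.t x.1 then
          Sum.inl ⟨g.fV (r.incL.fV hk.choose), r.kept_incL G h.1 _⟩
        else Sum.inr ⟨r.R.t x.1, fun k hk' => hk ⟨k, hk'⟩⟩
  l := fun v =>
    match v with
    | Sum.inl x =>
        if hk : ∃ k : r.K.V, r.K.l k = none ∧ g.fV (r.incL.fV k) = x.1 then
          r.R.l (r.incR.fV hk.choose)
        else G.l x.1
    | Sum.inr v => r.R.l v.1
  m := fun e =>
    match e with
    | Sum.inl x => G.m x.1
    | Sum.inr x => r.R.m x.1
  p := fun v =>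
    match v with
    | Sum.inl x =>
        if hk : ∃ k : r.K.V, r.K.p k = none ∧ g.fV (r.incL.fV k) = x.1 then
          r.R.p (r.incR.fV hk.choose)
        else G.p x.1
    | Sum.inr v => r.R.p v.1

/-- Direct derivation `G ⇒_r M`: there is an applicable match `g` such that `M`
is isomorphic to the result of applying `r` to `G` via `g`. -/
def Deriv (r : Rule LV LE) (G M : LGraph LV LE) : Prop :=
  ∃ (g : Morphism r.L G) (h : r.Applicable G g), Nonempty (Iso (r.result G g h) M)

end Rule

/-- `G ⇒_𝓡 H` for a set of rules. -/
def GTStep {LV LE : Type} (Rs : Set (Rule LV LE)) (G H : LGraph LV LE) : Prop :=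
  ∃ r ∈ Rs, r.Deriv G H

/-- `G ⇒*_𝓡 H`: the reflexive-transitive closure of `⇒_𝓡`, up to isomorphism. -/
def GTDerivStar {LV LE : Type} (Rs : Set (Rule LV LE)) (G H : LGraph LV LE) : Prop :=
  Relation.ReflTransGen (GTStep Rs) G H ∨ Nonempty (Iso G H)
/-! ## The tree-recognition system -/

/-- node labels: `□` (square) and `△` (triangle) -/
inductive NodeLab : Type where
  | square : NodeLab
  | tri : NodeLab
deriving DecidableEq

/-- `L` of rule `r0`: `v1 --□--> v2`, both `□`-labelled, `v1` unrooted, `v2` rooted. -/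
abbrev L0 : LGraph NodeLab Unit where
  V := Fin 2
  E := Unit
  finV := inferInstance
  finE := inferInstance
  s := fun _ => 0
  t := fun _ => 1
  l := fun _ => some .square
  m := fun _ => ()
  p := ![some false, some true]

/-- `K` of rules `r0` and `r1`: the single node `v1`, unlabelled, rootedness undefined. -/
abbrev K0 : LGraph NodeLab Unit where
  V := Unit
  E := PEmpty
  finV := inferInstance
  finE := inferInstance
  s := PEmpty.elim
  t := PEmpty.elim
  l := fun _ => none
  m := PEmpty.elim
  p := fun _ => none

/-- `R` of rules `r0` and `r1`: the single node `v1`, labelled `□`, rooted. -/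
abbrev R0 : LGraph NodeLab Unit where
  V := Unit
  E := PEmpty
  finV := inferInstance
  finE := inferInstance
  s := PEmpty.elim
  t := PEmpty.elim
  l := fun _ => some .square
  m := PEmpty.elim
  p := fun _ => some true

def incL0 : Morphism K0 L0 where
  fV := fun _ => 0
  fE := PEmpty.elim
  src := fun e => e.elim
  tgt := fun e => e.elim
  edgeLabel := fun e => e.elim
  nodeLabel := fun _ _ h => nomatch h
  rootedness := fun _ _ h => nomatch h

def incR0 : Morphism K0 R0 where
  fV := id
  fE := PEmpty.elim
  src := fun e => e.elim
  tgt := fun e => e.elim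
  edgeLabel := fun e => e.elim
  nodeLabel := fun _ _ h => nomatch h
  rootedness := fun _ _ h => nomatch h

/-- rule `r0`: prune a rooted `□`-leaf with unrooted `□`-parent, root moves to the parent -/
def r0 : Rule NodeLab Unit where
  L := L0
  K := K0
  R := R0
  incL := incL0
  incR := incR0
  injL := ⟨Function.injective_of_subsingleton _, Function.injective_of_subsingleton _⟩
  injR := ⟨Function.injective_of_subsingleton _, Function.injective_of_subsingleton _⟩

/-- `L` of rule `r1`: like `L0` but `v1` is labelled `△`. -/
abbrev L1 : LGraph NodeLab Unit where
  V := Fin 2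
  E := Unit
  finV := inferInstance
  finE := inferInstance
  s := fun _ => 0
  t := fun _ => 1
  l := ![some .tri, some .square]
  m := fun _ => ()
  p := ![some false, some true]

def incL1 : Morphism K0 L1 where
  fV := fun _ => 0
  fE := PEmpty.elim
  src := fun e => e.elim
  tgt := fun e => e.elim
  edgeLabel := fun e => e.elim
  nodeLabel := fun _ _ h => nomatch h
  rootedness := fun _ _ h => nomatch h

/-- rule `r1`: prune a rooted `□`-leaf with unrooted `△`-parent, root moves to the
parent which becomes `□`-labelled -/
def r1 : Rule NodeLab Unit where
  L := L1
  K := K0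
  R := R0
  incL := incL1
  incR := incR0
  injL := ⟨Function.injective_of_subsingleton _, Function.injective_of_subsingleton _⟩
  injR := ⟨Function.injective_of_subsingleton _, Function.injective_of_subsingleton _⟩

/-- `L` of rule `r2`: `v1 --□--> v2`, both `□`-labelled, `v1` rooted, `v2` unrooted. -/
abbrev L2 : LGraph NodeLab Unit where
  V := Fin 2
  E := Unit
  finV := inferInstance
  finE := inferInstance
  s := fun _ => 0
  t := fun _ => 1
  l := fun _ => some .square
  m := fun _ => ()
  p := ![some true, some false]

/-- `K` of rule `r2`: nodes `v1, v2`, unlabelled, rootedness undefined, no edges. -/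
abbrev K2 : LGraph NodeLab Unit where
  V := Fin 2
  E := PEmpty
  finV := inferInstance
  finE := inferInstance
  s := PEmpty.elim
  t := PEmpty.elim
  l := fun _ => none
  m := PEmpty.elim
  p := fun _ => none

/-- `R` of rule `r2`: `v1 --□--> v2`, `v1` labelled `△` and unrooted, `v2` labelled `□`
and rooted. -/
abbrev R2 : LGraph NodeLab Unit where
  V := Fin 2
  E := Unit
  finV := inferInstance
  finE := inferInstance
  s := fun _ => 0
  t := fun _ => 1
  l := ![some .tri, some .square]
  m := fun _ => ()
  p := ![some false, some true]

def incL2 : Morphism K2 L2 where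
  fV := id
  fE := PEmpty.elim
  src := fun e => e.elim
  tgt := fun e => e.elim
  edgeLabel := fun e => e.elim
  nodeLabel := fun _ _ h => nomatch h
  rootedness := fun _ _ h => nomatch h

def incR2 : Morphism K2 R2 where
  fV := id
  fE := PEmpty.elim
  src := fun e => e.elim
  tgt := fun e => e.elim
  edgeLabel := fun e => e.elim
  nodeLabel := fun _ _ h => nomatch h
  rootedness := fun _ _ h => nomatch h

/-- rule `r2`: push the root one step down an edge, marking the old position `△` -/
def r2 : Rule NodeLab Unit where
  L := L2
  K := K2
  R := R2
  incL := incL2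
  incR := incR2
  injL := ⟨Function.injective_id, Function.injective_of_subsingleton _⟩
  injR := ⟨Function.injective_id, Function.injective_of_subsingleton _⟩

/-- the rule set of the tree-recognition system -/
def TreeRules : Set (Rule NodeLab Unit) := {r0, r1, r2}

/-! ## Trees -/

/-- `IsUndirWalk G v l w`: `l` is an undirected walk from `v` to `w` in `G`;
each step is an edge together with a boolean telling in which direction it is
traversed. -/
def IsUndirWalk {LV LE : Type} (G : LGraph LV LE) : G.V → List (G.E × Bool) → G.V → Prop
  | v, [], w => v = w
  | v, (e, true) :: rest, w => G.s e = v ∧ IsUndirWalk G (G.t e) rest w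
  | v, (e, false) :: rest, w => G.t e = v ∧ IsUndirWalk G (G.s e) rest w

/-- connectedness via undirected walks -/
def IsConnectedGraph {LV LE : Type} (G : LGraph LV LE) : Prop :=
  ∀ v w : G.V, ∃ l, IsUndirWalk G v l w

/-- an undirected cycle: a non-empty closed undirected walk without repeated edges -/
def HasUndirCycle {LV LE : Type} (G : LGraph LV LE) : Prop :=
  ∃ (v : G.V) (l : List (G.E × Bool)), l ≠ [] ∧ IsUndirWalk G v l v ∧ (l.map Prod.fst).Nodup

/-- a tree: non-empty, connected, no undirected cycles, and every node has at
most one incoming edge -/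
def IsTree {LV LE : Type} (G : LGraph LV LE) : Prop :=
  Nonempty G.V ∧ IsConnectedGraph G ∧ ¬ HasUndirCycle G ∧
    ∀ v : G.V, Nat.card {e : G.E // G.t e = v} ≤ 1

/-- an input graph: a TLRG with exactly one root node, all nodes labelled `□`
(all edges are `□`-labelled since `Unit` is the edge alphabet) -/
def IsInputGraph (G : LGraph NodeLab Unit) : Prop :=
  G.IsTLRG ∧ (∀ v, G.l v = some .square) ∧ G.rootCount = 1

/-- no rule of `Rs` is applicable to `H` -/
def InNormalForm {LV LE : Type} (Rs : Set (Rule LV LE)) (H : LGraph LV LE) : Prop :=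
  ¬ ∃ r ∈ Rs, ∃ g : Morphism r.L H, r.Applicable H g


/-! ## Termination measure -/

attribute [local instance] Classical.propDecidable

/-- number of `□`-labelled nodes -/
noncomputable def sqCount (G : LGraph NodeLab Unit) : ℕ :=
  Nat.card {v : G.V // G.l v = some NodeLab.square}

/-- the termination measure `|V| + #□` -/
noncomputable def mu (G : LGraph NodeLab Unit) : ℕ := Nat.card G.V + sqCount G

lemma sqCount_le (G : LGraph NodeLab Unit) : sqCount G ≤ Nat.card G.V := by
  haveI := G.finV
  exact Nat.card_le_card_of_injective Subtype.val Subtype.val_injective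

lemma iso_mu {G H : LGraph NodeLab Unit} (i : Iso G H) : mu G = mu H := by
  have eV : G.V ≃ H.V := ⟨i.toMor.fV, i.invMor.fV, i.leftV, i.rightV⟩
  have eS : {v : G.V // G.l v = some NodeLab.square} ≃
      {w : H.V // H.l w = some NodeLab.square} :=
    ⟨fun v => ⟨i.toMor.fV v.1, i.toMor.nodeLabel _ _ v.2⟩,
     fun w => ⟨i.invMor.fV w.1, i.invMor.nodeLabel _ _ w.2⟩,
     fun v => Subtype.ext (i.leftV v.1), fun w => Subtype.ext (i.rightV w.1)⟩
  unfold mu sqCount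
  rw [Nat.card_congr eV, Nat.card_congr eS]

lemma card_ne {α : Type} [Finite α] (a : α) :
    Nat.card {x : α // x ≠ a} + 1 = Nat.card α := by
  haveI : Unique {x : α // x = a} := ⟨⟨⟨a, rfl⟩⟩, fun y => Subtype.ext y.2⟩
  have e := Equiv.sumCompl (fun x : α => x = a)
  have h2 := Nat.card_congr e
  rw [Nat.card_sum, Nat.card_unique] at h2
  have e2 : {x : α // x ≠ a} ≃ {x : α // ¬ x = a} := Equiv.subtypeEquivRight fun _ => Iff.rfl
  rw [Nat.card_congr e2]
  omega

lemma card_and_ne {α : Type} [Finite α] {P : α → Prop} {b : α} (hb : P b) :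
    Nat.card {x : α // x ≠ b ∧ P x} + 1 = Nat.card {x : α // P x} := by
  have e : {x : α // x ≠ b ∧ P x} ≃ {y : {x : α // P x} // y ≠ ⟨b, hb⟩} :=
    ⟨fun x => ⟨⟨x.1, x.2.2⟩, fun hEq => x.2.1 (congrArg Subtype.val hEq)⟩,
     fun y => ⟨y.1.1, fun hEq => y.2 (Subtype.ext hEq), y.1.2⟩,
     fun x => rfl, fun y => rfl⟩
  rw [Nat.card_congr e, card_ne]

lemma mu_step_r0 {G : LGraph NodeLab Unit} (g : Morphism r0.L G)
    (h : r0.Applicable G g) : mu (r0.result G g h) < mu G := by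
  haveI := G.finV
  have hla : G.l (g.fV (0 : Fin 2)) = some NodeLab.square := g.nodeLabel (0 : Fin 2) _ rfl
  have hlb : G.l (g.fV (1 : Fin 2)) = some NodeLab.square := g.nodeLabel (1 : Fin 2) _ rfl
  have hdel : ∀ x : G.V, x ∈ r0.DelV G g ↔ x = g.fV (1 : Fin 2) := by
    intro x
    constructor
    · rintro ⟨v, hv, rfl⟩
      obtain ⟨vv, hvlt⟩ := v
      interval_cases vv
      · exact absurd rfl (hv Unit.unit)
      · rfl
    · rintro rfl
      exact ⟨(1 : Fin 2), fun k hk => absurd (show (0 : Fin 2) = 1 from hk) (by decide : ¬ (0 : Fin 2) = 1), rfl⟩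
  -- vertex count drops
  have hV : Nat.card (r0.result G g h).V + 1 ≤ Nat.card G.V := by
    rw [← card_ne (g.fV (1 : Fin 2))]
    have hinj : Function.Injective
        (fun w : (r0.result G g h).V =>
          match w with
          | Sum.inl x => (⟨x.1, fun hxb => x.2 ((hdel x.1).2 hxb)⟩ : {x : G.V // x ≠ g.fV (1 : Fin 2)})
          | Sum.inr q => absurd rfl (q.2 q.1)) := by
      rintro (x | q) (y | p) hEq
      · have h2 := congrArg Subtype.val hEq
        have h3 : x.1 = y.1 := h2
        exact congrArg Sum.inl (Subtype.ext h3)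
      · exact absurd rfl (p.2 p.1)
      · exact absurd rfl (q.2 q.1)
      · exact absurd rfl (q.2 q.1)
    exact Nat.add_le_add_right (Nat.card_le_card_of_injective _ hinj) 1
  -- label characterisation
  have hlab : ∀ (x : {x : G.V // x ∉ r0.DelV G g}),
      ((r0.result G g h).l (Sum.inl x) = some NodeLab.square ↔
        G.l x.1 = some NodeLab.square) := by
    intro x
    show (if hk : ∃ k : r0.K.V, r0.K.l k = none ∧ g.fV (r0.incL.fV k) = x.1
          then r0.R.l (r0.incR.fV hk.choose) else G.l x.1) = some NodeLab.square ↔ _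
    split_ifs with hk
    · have hkx : g.fV (r0.incL.fV hk.choose) = x.1 := hk.choose_spec.2
      exact ⟨fun _ => by rw [← hkx]; exact hla, fun _ => rfl⟩
    · exact Iff.rfl
  have hS : sqCount (r0.result G g h) ≤ sqCount G := by
    have hinj : Function.Injective
        (fun w : {v : (r0.result G g h).V // (r0.result G g h).l v = some NodeLab.square} =>
          match w with
          | ⟨Sum.inl x, hx⟩ => (⟨x.1, (hlab x).1 hx⟩ : {x : G.V // G.l x = some NodeLab.square})
          | ⟨Sum.inr q, _⟩ => absurd rfl (q.2 q.1)) := by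
      rintro ⟨x | q, hx⟩ ⟨y | p, hy⟩ hEq
      · have h2 := congrArg Subtype.val hEq
        have h3 : x.1 = y.1 := h2
        exact Subtype.ext (congrArg Sum.inl (Subtype.ext h3))
      · exact absurd rfl (p.2 p.1)
      · exact absurd rfl (q.2 q.1)
      · exact absurd rfl (q.2 q.1)
    exact Nat.card_le_card_of_injective _ hinj
  unfold mu
  omega

lemma mu_step_r1 {G : LGraph NodeLab Unit} (g : Morphism r1.L G)
    (h : r1.Applicable G g) : mu (r1.result G g h) < mu G := by
  haveI := G.finV
  have hla : G.l (g.fV (0 : Fin 2)) = some NodeLab.tri := g.nodeLabel (0 : Fin 2) _ rfl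
  have hlb : G.l (g.fV (1 : Fin 2)) = some NodeLab.square := g.nodeLabel (1 : Fin 2) _ rfl
  have hdel : ∀ x : G.V, x ∈ r1.DelV G g ↔ x = g.fV (1 : Fin 2) := by
    intro x
    constructor
    · rintro ⟨v, hv, rfl⟩
      obtain ⟨vv, hvlt⟩ := v
      interval_cases vv
      · exact absurd rfl (hv Unit.unit)
      · rfl
    · rintro rfl
      exact ⟨(1 : Fin 2), fun k hk => absurd (show (0 : Fin 2) = 1 from hk)
        (by decide : ¬ (0 : Fin 2) = 1), rfl⟩
  -- vertex count drops
  have hV : Nat.card (r1.result G g h).V + 1 ≤ Nat.card G.V := by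
    rw [← card_ne (g.fV (1 : Fin 2))]
    have hinj : Function.Injective
        (fun w : (r1.result G g h).V =>
          match w with
          | Sum.inl x => (⟨x.1, fun hxb => x.2 ((hdel x.1).2 hxb)⟩ :
              {x : G.V // x ≠ g.fV (1 : Fin 2)})
          | Sum.inr q => absurd rfl (q.2 q.1)) := by
      rintro (x | q) (y | p) hEq
      · have h2 := congrArg Subtype.val hEq
        have h3 : x.1 = y.1 := h2
        exact congrArg Sum.inl (Subtype.ext h3)
      · exact absurd rfl (p.2 p.1)
      · exact absurd rfl (q.2 q.1)
      · exact absurd rfl (q.2 q.1)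
    exact Nat.add_le_add_right (Nat.card_le_card_of_injective _ hinj) 1
  -- label characterisation
  have hlab : ∀ (x : {x : G.V // x ∉ r1.DelV G g}),
      ((r1.result G g h).l (Sum.inl x) = some NodeLab.square ↔
        (x.1 = g.fV (0 : Fin 2) ∨ G.l x.1 = some NodeLab.square)) := by
    intro x
    show (if hk : ∃ k : r1.K.V, r1.K.l k = none ∧ g.fV (r1.incL.fV k) = x.1
          then r1.R.l (r1.incR.fV hk.choose) else G.l x.1) = some NodeLab.square ↔ _
    split_ifs with hk
    · have hkx : g.fV (r1.incL.fV hk.choose) = x.1 := hk.choose_spec.2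
      exact ⟨fun _ => Or.inl hkx.symm, fun _ => rfl⟩
    · constructor
      · exact fun hlx => Or.inr hlx
      · rintro (hxa | hlx)
        · exact absurd ⟨Unit.unit, rfl, hxa.symm⟩ hk
        · exact hlx
  -- square count does not increase
  have hS : sqCount (r1.result G g h) ≤ sqCount G := by
    have step1 : sqCount (r1.result G g h) ≤
        Nat.card {x : G.V // x ≠ g.fV (1 : Fin 2) ∧
          (x = g.fV (0 : Fin 2) ∨ G.l x = some NodeLab.square)} := by
      have hinj : Function.Injective
          (fun w : {v : (r1.result G g h).V //
              (r1.result G g h).l v = some NodeLab.square} =>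
            match w with
            | ⟨Sum.inl x, hx⟩ => (⟨x.1, fun hxb => x.2 ((hdel x.1).2 hxb), (hlab x).1 hx⟩ :
                {x : G.V // x ≠ g.fV (1 : Fin 2) ∧
                  (x = g.fV (0 : Fin 2) ∨ G.l x = some NodeLab.square)})
            | ⟨Sum.inr q, _⟩ => absurd rfl (q.2 q.1)) := by
        rintro ⟨x | q, hx⟩ ⟨y | p, hy⟩ hEq
        · have h2 := congrArg Subtype.val hEq
          have h3 : x.1 = y.1 := h2
          exact Subtype.ext (congrArg Sum.inl (Subtype.ext h3))
        · exact absurd rfl (p.2 p.1)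
        · exact absurd rfl (q.2 q.1)
        · exact absurd rfl (q.2 q.1)
      exact Nat.card_le_card_of_injective _ hinj
    have step2 : Nat.card {x : G.V // x ≠ g.fV (1 : Fin 2) ∧
          (x = g.fV (0 : Fin 2) ∨ G.l x = some NodeLab.square)} ≤ sqCount G := by
      have hinj : Function.Injective
          (fun x : {x : G.V // x ≠ g.fV (1 : Fin 2) ∧
              (x = g.fV (0 : Fin 2) ∨ G.l x = some NodeLab.square)} =>
            if hxa : x.1 = g.fV (0 : Fin 2) then
              (⟨g.fV (1 : Fin 2), hlb⟩ : {x : G.V // G.l x = some NodeLab.square})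
            else ⟨x.1, (x.2.2).resolve_left hxa⟩) := by
        intro x y hEq
        by_cases hxa : x.1 = g.fV (0 : Fin 2) <;> by_cases hya : y.1 = g.fV (0 : Fin 2)
        · exact Subtype.ext (hxa.trans hya.symm)
        · exfalso
          simp only [dif_pos hxa, dif_neg hya] at hEq
          have h2 := congrArg Subtype.val hEq
          have h3 : g.fV (1 : Fin 2) = y.1 := h2
          exact y.2.1 h3.symm
        · exfalso
          simp only [dif_neg hxa, dif_pos hya] at hEq
          have h2 := congrArg Subtype.val hEq
          have h3 : x.1 = g.fV (1 : Fin 2) := h2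
          exact x.2.1 h3
        · simp only [dif_neg hxa, dif_neg hya] at hEq
          have h2 := congrArg Subtype.val hEq
          have h3 : x.1 = y.1 := h2
          exact Subtype.ext h3
      exact Nat.card_le_card_of_injective _ hinj
    exact step1.trans step2
  unfold mu
  omega

lemma mu_step_r2 {G : LGraph NodeLab Unit} (g : Morphism r2.L G)
    (h : r2.Applicable G g) : mu (r2.result G g h) < mu G := by
  haveI := G.finV
  have hla : G.l (g.fV (0 : Fin 2)) = some NodeLab.square := g.nodeLabel (0 : Fin 2) _ rfl
  have hlb : G.l (g.fV (1 : Fin 2)) = some NodeLab.square := g.nodeLabel (1 : Fin 2) _ rfl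
  have hab : g.fV (0 : Fin 2) ≠ g.fV (1 : Fin 2) := fun hEq =>
    absurd (show (0 : Fin 2) = 1 from h.1.1 hEq) (by decide : ¬ (0 : Fin 2) = 1)
  -- vertex count does not increase
  have hV : Nat.card (r2.result G g h).V ≤ Nat.card G.V := by
    have hinj : Function.Injective
        (fun w : (r2.result G g h).V =>
          match w with
          | Sum.inl x => x.1
          | Sum.inr q => absurd rfl (q.2 q.1)) := by
      rintro (x | q) (y | p) hEq
      · have h3 : x.1 = y.1 := hEq
        exact congrArg Sum.inl (Subtype.ext h3)
      · exact absurd rfl (p.2 p.1)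
      · exact absurd rfl (q.2 q.1)
      · exact absurd rfl (q.2 q.1)
    exact Nat.card_le_card_of_injective _ hinj
  -- label characterisation
  have hlab : ∀ (x : {x : G.V // x ∉ r2.DelV G g}),
      ((r2.result G g h).l (Sum.inl x) = some NodeLab.square ↔
        (x.1 ≠ g.fV (0 : Fin 2) ∧ G.l x.1 = some NodeLab.square)) := by
    intro x
    show (if hk : ∃ k : r2.K.V, r2.K.l k = none ∧ g.fV (r2.incL.fV k) = x.1
          then r2.R.l (r2.incR.fV hk.choose) else G.l x.1) = some NodeLab.square ↔ _
    split_ifs with hk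
    · generalize hck : hk.choose = k0
      have hkeq : g.fV (r2.incL.fV k0) = x.1 := by
        rw [← hck]; exact hk.choose_spec.2
      have hc : k0 = (0 : Fin 2) ∨ k0 = (1 : Fin 2) :=
        (by decide : ∀ k : Fin 2, k = 0 ∨ k = 1) k0
      rcases hc with h0 | h1
      · rw [h0] at hkeq ⊢
        have hL : r2.R.l (r2.incR.fV (0 : Fin 2)) = some NodeLab.tri := by decide
        rw [hL]
        constructor
        · intro hc
          exact absurd hc (by decide : ¬ (some NodeLab.tri = some NodeLab.square))
        · intro hc
          exact (hc.1 (show x.1 = g.fV (0 : Fin 2) from hkeq.symm)).elim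
      · rw [h1] at hkeq ⊢
        have hL : r2.R.l (r2.incR.fV (1 : Fin 2)) = some NodeLab.square := by decide
        rw [hL]
        have hx1 : x.1 = g.fV (1 : Fin 2) := hkeq.symm
        constructor
        · intro _
          refine ⟨?_, by rw [hx1]; exact hlb⟩
          rw [hx1]
          exact fun hc => hab hc.symm
        · intro _; rfl
    · have hxa : x.1 ≠ g.fV (0 : Fin 2) := fun hEq => hk ⟨(0 : Fin 2), rfl, hEq.symm⟩
      exact ⟨fun hp => ⟨hxa, hp⟩, fun hc => hc.2⟩
  -- square count drops
  have hS : sqCount (r2.result G g h) + 1 ≤ sqCount G := by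
    rw [show sqCount G = Nat.card {x : G.V // G.l x = some NodeLab.square} from rfl,
      ← card_and_ne (P := fun x : G.V => G.l x = some NodeLab.square) (b := g.fV (0 : Fin 2)) hla]
    have hinj : Function.Injective
        (fun w : {v : (r2.result G g h).V //
            (r2.result G g h).l v = some NodeLab.square} =>
          match w with
          | ⟨Sum.inl x, hx⟩ => (⟨x.1, (hlab x).1 hx⟩ :
              {x : G.V // x ≠ g.fV (0 : Fin 2) ∧ G.l x = some NodeLab.square})
          | ⟨Sum.inr q, _⟩ => absurd rfl (q.2 q.1)) := by
      rintro ⟨x | q, hx⟩ ⟨y | p, hy⟩ hEq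
      · have h2 := congrArg Subtype.val hEq
        have h3 : x.1 = y.1 := h2
        exact Subtype.ext (congrArg Sum.inl (Subtype.ext h3))
      · exact absurd rfl (p.2 p.1)
      · exact absurd rfl (q.2 q.1)
      · exact absurd rfl (q.2 q.1)
    exact Nat.add_le_add_right (Nat.card_le_card_of_injective _ hinj) 1
  unfold mu
  omega

/-- **Tree Termination**: the tree-recognition system is terminating on TLRGs,
and every derivation sequence from a TLRG `G₀` has length at most `2·|V_{G₀}|`. -/
theorem tree_termination :
    (¬ ∃ f : ℕ → LGraph NodeLab Unit, (f 0).IsTLRG ∧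
        ∀ n, GTStep TreeRules (f n) (f (n + 1))) ∧
    (∀ (n : ℕ) (f : ℕ → LGraph NodeLab Unit), (f 0).IsTLRG →
        (∀ i < n, GTStep TreeRules (f i) (f (i + 1))) →
        n ≤ 2 * Nat.card (f 0).V) := by
  have step_mu : ∀ {G H : LGraph NodeLab Unit}, GTStep TreeRules G H → mu H < mu G := by
    intro G H h
    obtain ⟨r, hr, g, happ, ⟨i⟩⟩ := h
    rw [← iso_mu i]
    simp only [TreeRules, Set.mem_insert_iff, Set.mem_singleton_iff] at hr
    rcases hr with rfl | rfl | rfl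
    · exact mu_step_r0 g happ
    · exact mu_step_r1 g happ
    · exact mu_step_r2 g happ
  constructor
  · rintro ⟨f, -, hstep⟩
    have key : ∀ n, mu (f n) + n ≤ mu (f 0) := by
      intro n; induction n with
      | zero => simp
      | succ n ih => have := step_mu (hstep n); omega
    have := key (mu (f 0) + 1); omega
  · intro n f _ hstep
    have key : ∀ i, i ≤ n → mu (f i) + i ≤ mu (f 0) := by
      intro i
      induction i with
      | zero => intro _; simp
      | succ i ih =>
        intro hi
        have h1 := step_mu (hstep i (by omega))
        have h2 := ih (by omega)
        omega
    have h3 := key n le_rfl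
    have h4 : mu (f 0) ≤ 2 * Nat.card (f 0).V := by
      have := sqCount_le (f 0); unfold mu at *; omega
    omega
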